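/- For every quaternion q and every k ≥ 1, the Appell polynomial Q_k(q,q̄) = Σ_{j=0}^k (2(k-j+1)/((k+1)(k+2))) q^{k-j} q̄^j satisfies (1/2)·D̄ Q_k(q,q̄) = k·Q_{k-1}(q,q̄), where D̄ = ∂_{x_0} − i∂_{x_1} − j∂_{x_2} − k∂_{x_3} is the conjugate Cauchy–Fueter operator. -/

import Mathlib

open Quaternion Real MeasureTheory

noncomputable section

/-- The quaternion imaginary unit `i`. -/
def qi : ℍ[ℝ] := ⟨0,1,0,0⟩
/-- The quaternion imaginary unit `j`. -/
def qj : ℍ[ℝ] := ⟨0,0,1,0⟩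
/-- The quaternion imaginary unit `k`. -/
def qk : ℍ[ℝ] := ⟨0,0,0,1⟩

/-- Directional (partial) derivative of `f : ℍ → ℍ` at `q` in direction `v`. -/
def pd (v : ℍ[ℝ]) (f : ℍ[ℝ] → ℍ[ℝ]) (q : ℍ[ℝ]) : ℍ[ℝ] := fderiv ℝ f q v

/-- The Cauchy–Fueter operator `D = ∂_{x₀} + i∂_{x₁} + j∂_{x₂} + k∂_{x₃}`. -/
def Dop (f : ℍ[ℝ] → ℍ[ℝ]) (q : ℍ[ℝ]) : ℍ[ℝ] :=
  pd 1 f q + qi * pd qi f q + qj * pd qj f q + qk * pd qk f q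

/-- The conjugate Cauchy–Fueter operator `D̄ = ∂_{x₀} - i∂_{x₁} - j∂_{x₂} - k∂_{x₃}`. -/
def Dbar (f : ℍ[ℝ] → ℍ[ℝ]) (q : ℍ[ℝ]) : ℍ[ℝ] :=
  pd 1 f q - qi * pd qi f q - qj * pd qj f q - qk * pd qk f q

/-- The 4-dimensional Laplacian `Δ = ∂²_{x₀} + ∂²_{x₁} + ∂²_{x₂} + ∂²_{x₃}`. -/
def qlap (f : ℍ[ℝ] → ℍ[ℝ]) (q : ℍ[ℝ]) : ℍ[ℝ] :=
  pd 1 (pd 1 f) q + pd qi (pd qi f) q + pd qj (pd qj f) q + pd qk (pd qk f) q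

/-- The quaternionic Appell polynomials
`Q_k(q,q̄) = Σ_{j=0}^k (2(k-j+1)/((k+1)(k+2))) q^{k-j} q̄^j`. -/
def Qa (k : ℕ) (q : ℍ[ℝ]) : ℍ[ℝ] :=
  ∑ j ∈ Finset.range (k+1),
    ((2*((k:ℝ)-j+1))/(((k:ℝ)+1)*((k:ℝ)+2))) • (q^(k-j) * (star q)^j)

/-- The generalized Appell polyanalytic polynomials `M_{k,s}(q,q̄) = x₀^k Q_s(q,q̄)`,
where `x₀ = Re q`. -/
def Ma (k s : ℕ) (q : ℍ[ℝ]) : ℍ[ℝ] := q.re ^ k • Qa s q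

/-! ### Auxiliary material -/

set_option linter.unnecessarySeqFocus false

instance : StarModule ℝ ℍ[ℝ] := ⟨fun r x => by ext <;> simp⟩

instance : ContinuousStar ℍ[ℝ] := ⟨by
  have h : (star : ℍ[ℝ] → ℍ[ℝ]) = fun q => ((2 * q.re : ℝ) : ℍ[ℝ]) - q := by
    funext q; exact q.star_eq_two_re_sub
  rw [h]
  exact (Quaternion.continuous_coe.comp (continuous_const.mul Quaternion.continuous_re)).sub
    continuous_id⟩

@[simp] lemma qi_re : qi.re = 0 := rfl
@[simp] lemma qi_imI : qi.imI = 1 := rfl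
@[simp] lemma qi_imJ : qi.imJ = 0 := rfl
@[simp] lemma qi_imK : qi.imK = 0 := rfl
@[simp] lemma qj_re : qj.re = 0 := rfl
@[simp] lemma qj_imI : qj.imI = 0 := rfl
@[simp] lemma qj_imJ : qj.imJ = 1 := rfl
@[simp] lemma qj_imK : qj.imK = 0 := rfl
@[simp] lemma qk_re : qk.re = 0 := rfl
@[simp] lemma qk_imI : qk.imI = 0 := rfl
@[simp] lemma qk_imJ : qk.imJ = 0 := rfl
@[simp] lemma qk_imK : qk.imK = 1 := rfl

lemma star_qi : star qi = -qi := by ext <;> simp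
lemma star_qj : star qj = -qj := by ext <;> simp
lemma star_qk : star qk = -qk := by ext <;> simp

lemma sumA (a : ℍ[ℝ]) : a - qi*a*qi - qj*a*qj - qk*a*qk = (2:ℝ) • (a + star a) := by
  ext <;> simp <;> ring

lemma sumB (a : ℍ[ℝ]) : a + qi*a*qi + qj*a*qj + qk*a*qk = -((2:ℝ) • star a) := by
  ext <;> simp <;> ring

lemma pd_mul {f g : ℍ[ℝ] → ℍ[ℝ]} {q : ℍ[ℝ]} (v : ℍ[ℝ])
    (hf : DifferentiableAt ℝ f q) (hg : DifferentiableAt ℝ g q) :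
    pd v (fun x => f x * g x) q = f q * pd v g q + pd v f q * g q := by
  unfold pd
  rw [fderiv_fun_mul' hf hg]
  simp [smul_eq_mul]

lemma pd_pow (m : ℕ) (v q : ℍ[ℝ]) :
    pd v (fun x : ℍ[ℝ] => x ^ m) q = ∑ r ∈ Finset.range m, q ^ r * v * q ^ (m - 1 - r) := by
  induction m with
  | zero => simp [pd]
  | succ m ih =>
    have h1 : DifferentiableAt ℝ (fun x : ℍ[ℝ] => x ^ m) q := differentiableAt_fun_id.pow m
    have h2 : pd v (fun x : ℍ[ℝ] => x ^ m * x) q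
        = q ^ m * v + (∑ r ∈ Finset.range m, q ^ r * v * q ^ (m - 1 - r)) * q := by
      rw [pd_mul v h1 differentiableAt_fun_id]
      have hid : pd v (fun x : ℍ[ℝ] => x) q = v := by simp [pd]
      rw [hid, ih]
    simp only [pow_succ]
    rw [h2, Finset.sum_range_succ, Finset.sum_mul]
    have e1 : ∀ r ∈ Finset.range m, q ^ r * v * q ^ (m - 1 - r) * q = q ^ r * v * q ^ (m - r) := by
      intro r hr
      rw [Finset.mem_range] at hr
      rw [mul_assoc, ← pow_succ]
      congr 2
      omega
    rw [Finset.sum_congr rfl e1]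
    have hm : m + 1 - 1 = m := rfl
    rw [hm, Nat.sub_self, pow_zero, mul_one, add_comm]

lemma pd_star_pow (j : ℕ) (v q : ℍ[ℝ]) :
    pd v (fun x : ℍ[ℝ] => (star x) ^ j) q
      = ∑ a ∈ Finset.range j, (star q) ^ a * star v * (star q) ^ (j - 1 - a) := by
  have h : HasFDerivAt (fun x : ℍ[ℝ] => (star x) ^ j)
      ((fderiv ℝ (fun x : ℍ[ℝ] => x ^ j) (star q)).comp
        ((starL' ℝ : ℍ[ℝ] ≃L[ℝ] ℍ[ℝ]) : ℍ[ℝ] →L[ℝ] ℍ[ℝ])) q := by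
    have h1 : HasFDerivAt (fun x : ℍ[ℝ] => x ^ j) (fderiv ℝ (fun x : ℍ[ℝ] => x ^ j) (star q))
        (star q) := (differentiableAt_fun_id.pow j).hasFDerivAt
    have h2 : HasFDerivAt (fun x : ℍ[ℝ] => star x)
        ((starL' ℝ : ℍ[ℝ] ≃L[ℝ] ℍ[ℝ]) : ℍ[ℝ] →L[ℝ] ℍ[ℝ]) q := (hasFDerivAt_id q).star
    exact h1.comp q h2
  unfold pd
  rw [h.fderiv]
  simp only [ContinuousLinearMap.coe_comp', Function.comp_apply, ContinuousLinearEquiv.coe_coe,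
    starL'_apply]
  exact pd_pow j (star v) (star q)

lemma diff_starpow (j : ℕ) (q : ℍ[ℝ]) :
    DifferentiableAt ℝ (fun x : ℍ[ℝ] => (star x) ^ j) q :=
  (differentiableAt_fun_id.star).pow j

lemma diff_mono (m j : ℕ) (q : ℍ[ℝ]) :
    DifferentiableAt ℝ (fun x : ℍ[ℝ] => x ^ m * (star x) ^ j) q :=
  (differentiableAt_fun_id.pow m).mul (diff_starpow j q)

lemma pd_mono (m j : ℕ) (v q : ℍ[ℝ]) :
    pd v (fun x : ℍ[ℝ] => x ^ m * (star x) ^ j) q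
      = (∑ r ∈ Finset.range m, q ^ r * v * q ^ (m - 1 - r)) * (star q) ^ j
        + q ^ m * (∑ a ∈ Finset.range j, (star q) ^ a * star v * (star q) ^ (j - 1 - a)) := by
  rw [pd_mul (f := fun x : ℍ[ℝ] => x ^ m) v (differentiableAt_fun_id.pow m) (diff_starpow j q), pd_pow, pd_star_pow, add_comm]

lemma Dbar_mono (m j : ℕ) (q : ℍ[ℝ]) :
    Dbar (fun x : ℍ[ℝ] => x ^ m * (star x) ^ j) q
      = ∑ r ∈ Finset.range m,
          (2:ℝ) • ((q ^ r + (star q) ^ r) * (q ^ (m - 1 - r) * (star q) ^ j))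
        + ∑ a ∈ Finset.range j,
          -((2:ℝ) • (q ^ a * ((star q) ^ m * (star q) ^ (j - 1 - a)))) := by
  unfold Dbar
  rw [pd_mono, pd_mono, pd_mono, pd_mono]
  simp only [mul_add, Finset.sum_mul, Finset.mul_sum]
  rw [show ∀ (a1 b1 a2 b2 a3 b3 a4 b4 : ℍ[ℝ]),
      (a1+b1) - (a2+b2) - (a3+b3) - (a4+b4)
        = (a1 - a2 - a3 - a4) + (b1 - b2 - b3 - b4) from fun _ _ _ _ _ _ _ _ => by abel]
  rw [← Finset.sum_sub_distrib, ← Finset.sum_sub_distrib, ← Finset.sum_sub_distrib,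
    ← Finset.sum_sub_distrib, ← Finset.sum_sub_distrib, ← Finset.sum_sub_distrib]
  congr 1
  · refine Finset.sum_congr rfl fun r _ => ?_
    have h := sumA (q ^ r)
    calc q ^ r * 1 * q ^ (m-1-r) * (star q) ^ j - qi * (q ^ r * qi * q ^ (m-1-r) * (star q) ^ j)
          - qj * (q ^ r * qj * q ^ (m-1-r) * (star q) ^ j)
          - qk * (q ^ r * qk * q ^ (m-1-r) * (star q) ^ j)
        = (q ^ r - qi * q ^ r * qi - qj * q ^ r * qj - qk * q ^ r * qk)
            * (q ^ (m-1-r) * (star q) ^ j) := by noncomm_ring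
      _ = (2:ℝ) • ((q ^ r + (star q) ^ r) * (q ^ (m-1-r) * (star q) ^ j)) := by
          rw [h, star_pow, smul_mul_assoc]
  · refine Finset.sum_congr rfl fun a _ => ?_
    have h := sumB (q ^ m * (star q) ^ a)
    calc q ^ m * ((star q) ^ a * star (1:ℍ[ℝ]) * (star q) ^ (j-1-a))
          - qi * (q ^ m * ((star q) ^ a * star qi * (star q) ^ (j-1-a)))
          - qj * (q ^ m * ((star q) ^ a * star qj * (star q) ^ (j-1-a)))
          - qk * (q ^ m * ((star q) ^ a * star qk * (star q) ^ (j-1-a)))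
        = (q ^ m * (star q) ^ a + qi * (q ^ m * (star q) ^ a) * qi
            + qj * (q ^ m * (star q) ^ a) * qj + qk * (q ^ m * (star q) ^ a) * qk)
            * (star q) ^ (j-1-a) := by
          simp only [star_qi, star_qj, star_qk, star_one]; noncomm_ring
      _ = -((2:ℝ) • (q ^ a * ((star q) ^ m * (star q) ^ (j-1-a)))) := by
          rw [h, star_mul, star_pow, star_pow, star_star, neg_mul, smul_mul_assoc, mul_assoc]

lemma gauss_real (n : ℕ) : ∑ i ∈ Finset.range (n+1), (i:ℝ) = n*(n+1)/2 := by
  have h := Finset.sum_range_id_mul_two (n+1)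
  have h2 : ((∑ i ∈ Finset.range (n+1), i : ℕ) : ℝ) * 2 = ((n:ℝ)+1) * n := by
    exact_mod_cast congrArg (Nat.cast : ℕ → ℝ) h
  rw [Nat.cast_sum] at h2
  linarith

def coefq (k j : ℕ) : ℝ := (2*((k:ℝ)-j+1))/(((k:ℝ)+1)*((k:ℝ)+2))

lemma sum_coefq_low (k t : ℕ) : ∑ j ∈ Finset.range (t+1), coefq k j
    = (((t:ℝ)+1)*(2*((k:ℝ)+1)) - (t:ℝ)*((t:ℝ)+1)) / (((k:ℝ)+1)*((k:ℝ)+2)) := by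
  unfold coefq
  rw [← Finset.sum_div]
  congr 1
  have e : ∀ j ∈ Finset.range (t+1), 2*((k:ℝ)-(j:ℝ)+1) = (2*((k:ℝ)+1)) - 2*(j:ℝ) :=
    fun j _ => by ring
  rw [Finset.sum_congr rfl e, Finset.sum_sub_distrib, Finset.sum_const, ← Finset.mul_sum,
    gauss_real, Finset.card_range, nsmul_eq_mul]
  push_cast
  ring

lemma sum_coefq_high (k t : ℕ) (h : t < k) : ∑ j ∈ Finset.Ico (k-t) (k+1), coefq k j
    = (((t:ℝ)+1)*((t:ℝ)+2)) / (((k:ℝ)+1)*((k:ℝ)+2)) := by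
  rw [Finset.sum_Ico_eq_sum_range]
  have hn : k+1-(k-t) = t+1 := by omega
  rw [hn]
  unfold coefq
  rw [← Finset.sum_div]
  congr 1
  have e : ∀ r ∈ Finset.range (t+1), 2*((k:ℝ)-(((k-t+r):ℕ):ℝ)+1) = (2*((t:ℝ)+1)) - 2*(r:ℝ) := by
    intro r _
    have hc : ((k-t+r:ℕ):ℝ) = (k:ℝ)-(t:ℝ)+(r:ℝ) := by
      push_cast [Nat.cast_sub h.le]; ring
    rw [hc]; ring
  rw [Finset.sum_congr rfl e, Finset.sum_sub_distrib, Finset.sum_const, ← Finset.mul_sum,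
    gauss_real, Finset.card_range, nsmul_eq_mul]
  push_cast
  ring

lemma pd_sum (s : Finset ℕ) (c : ℕ → ℝ) (F : ℕ → ℍ[ℝ] → ℍ[ℝ]) (v q : ℍ[ℝ])
    (hF : ∀ j ∈ s, DifferentiableAt ℝ (F j) q) :
    pd v (fun x => ∑ j ∈ s, c j • F j x) q = ∑ j ∈ s, c j • pd v (F j) q := by
  have H : HasFDerivAt (fun x => ∑ j ∈ s, c j • F j x)
      (∑ j ∈ s, c j • fderiv ℝ (F j) q) q :=
    HasFDerivAt.fun_sum fun j hj => ((hF j hj).hasFDerivAt).const_smul (c j)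
  unfold pd
  rw [H.fderiv]
  simp

lemma Dbar_sum (s : Finset ℕ) (c : ℕ → ℝ) (F : ℕ → ℍ[ℝ] → ℍ[ℝ]) (q : ℍ[ℝ])
    (hF : ∀ j ∈ s, DifferentiableAt ℝ (F j) q) :
    Dbar (fun x => ∑ j ∈ s, c j • F j x) q = ∑ j ∈ s, c j • Dbar (F j) q := by
  unfold Dbar
  rw [pd_sum s c F 1 q hF, pd_sum s c F qi q hF, pd_sum s c F qj q hF, pd_sum s c F qk q hF,
    Finset.mul_sum, Finset.mul_sum, Finset.mul_sum, ← Finset.sum_sub_distrib,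
    ← Finset.sum_sub_distrib, ← Finset.sum_sub_distrib]
  exact Finset.sum_congr rfl fun j _ => by
    rw [mul_smul_comm, mul_smul_comm, mul_smul_comm, ← smul_sub, ← smul_sub, ← smul_sub]

lemma half_Dbar_mono (k j : ℕ) (q : ℍ[ℝ]) (hj : j ≤ k) (hk : 1 ≤ k) :
    (1/2:ℝ) • Dbar (fun x : ℍ[ℝ] => x^(k-j) * (star x)^j) q
      = ((k-j:ℕ):ℝ) • (q^(k-1-j) * (star q)^j)
        + (∑ t ∈ Finset.Ico j k, q^(k-1-t) * (star q)^t)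
        - ∑ t ∈ Finset.Ico (k-j) k, q^(k-1-t) * (star q)^t := by
  have hcomm : Commute (star q) q := star_comm_self
  rw [Dbar_mono]
  rw [smul_add, Finset.smul_sum, Finset.smul_sum]
  have s1 : ∀ r ∈ Finset.range (k-j),
      (1/2:ℝ) • ((2:ℝ) • ((q^r + (star q)^r) * (q^(k-j-1-r) * (star q)^j)))
        = q^(k-1-j) * (star q)^j + q^(k-1-(j+r)) * (star q)^(j+r) := by
    intro r hr
    rw [Finset.mem_range] at hr
    rw [smul_smul]
    norm_num
    rw [add_mul]
    congr 1
    · rw [← mul_assoc, ← pow_add]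
      congr 2
      omega
    · rw [← mul_assoc, (hcomm.pow_pow r (k-j-1-r)).eq, mul_assoc, ← pow_add]
      have e1 : k-j-1-r = k-1-(j+r) := by omega
      have e2 : r + j = j + r := by omega
      rw [e1, e2]
  have s2 : ∀ a ∈ Finset.range j,
      (1/2:ℝ) • (-((2:ℝ) • (q^a * ((star q)^(k-j) * (star q)^(j-1-a)))))
        = -(q^(k-1-(k-1-a)) * (star q)^(k-1-a)) := by
    intro a ha
    rw [Finset.mem_range] at ha
    rw [smul_neg, smul_smul]
    norm_num
    rw [← pow_add]
    have e1 : (k-j) + (j-1-a) = k-1-a := by omega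
    have e2 : k-1-(k-1-a) = a := by omega
    rw [e1, e2]
  rw [Finset.sum_congr rfl s1, Finset.sum_congr rfl s2]
  rw [Finset.sum_add_distrib, Finset.sum_const, Finset.card_range,
    ← Nat.cast_smul_eq_nsmul ℝ]
  have hIco1 : ∑ t ∈ Finset.Ico j k, q^(k-1-t) * (star q)^t
      = ∑ r ∈ Finset.range (k-j), q^(k-1-(j+r)) * (star q)^(j+r) :=
    Finset.sum_Ico_eq_sum_range _ _ _
  have hIco2 : ∑ t ∈ Finset.Ico (k-j) k, q^(k-1-t) * (star q)^t
      = ∑ a ∈ Finset.range j, q^(k-1-(k-1-a)) * (star q)^(k-1-a) := by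
    rw [Finset.sum_Ico_eq_sum_range]
    have hkj : k - (k-j) = j := by omega
    rw [hkj]
    rw [← Finset.sum_range_reflect]
    refine Finset.sum_congr rfl fun a ha => ?_
    rw [Finset.mem_range] at ha
    have e1 : k - j + (j-1-a) = k-1-a := by omega
    rw [e1]
  rw [hIco1, hIco2, Finset.sum_neg_distrib]
  abel

/-- Appell property: for every quaternion `q` and every `k ≥ 1`,
`(1/2)·D̄ Q_k(q,q̄) = k·Q_{k-1}(q,q̄)`. -/
theorem appell_property (k : ℕ) (hk : 1 ≤ k) (q : ℍ[ℝ]) :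
    (1/2 : ℝ) • Dbar (Qa k) q = (k : ℝ) • Qa (k-1) q := by
  have hQ : Qa k = fun x => ∑ j ∈ Finset.range (k+1),
      coefq k j • (x^(k-j) * (star x)^j) := rfl
  rw [hQ, Dbar_sum _ _ _ _ (fun j _ => diff_mono (k-j) j q), Finset.smul_sum]
  have h1 : ∀ j ∈ Finset.range (k+1),
      (1/2:ℝ) • (coefq k j • Dbar (fun x => x^(k-j) * (star x)^j) q)
        = coefq k j • (((k-j:ℕ):ℝ) • (q^(k-1-j) * (star q)^j))
          + coefq k j • (∑ t ∈ Finset.Ico j k, q^(k-1-t) * (star q)^t)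
          - coefq k j • (∑ t ∈ Finset.Ico (k-j) k, q^(k-1-t) * (star q)^t) := by
    intro j hj
    rw [Finset.mem_range] at hj
    rw [smul_comm, half_Dbar_mono k j q (by omega) hk, smul_sub, smul_add]
  rw [Finset.sum_congr rfl h1, Finset.sum_sub_distrib, Finset.sum_add_distrib]
  have hA : ∑ j ∈ Finset.range (k+1), coefq k j • (((k-j:ℕ):ℝ) • (q^(k-1-j) * (star q)^j))
      = ∑ t ∈ Finset.range k, (coefq k t * ((k-t:ℕ):ℝ)) • (q^(k-1-t) * (star q)^t) := by
    rw [Finset.sum_range_succ, Nat.sub_self]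
    norm_num
    exact Finset.sum_congr rfl fun t _ => by rw [smul_smul]
  have hB : ∑ j ∈ Finset.range (k+1), coefq k j • (∑ t ∈ Finset.Ico j k, q^(k-1-t) * (star q)^t)
      = ∑ t ∈ Finset.range k,
          (∑ j ∈ Finset.range (t+1), coefq k j) • (q^(k-1-t) * (star q)^t) := by
    have e1 : ∀ j ∈ Finset.range (k+1),
        coefq k j • (∑ t ∈ Finset.Ico j k, q^(k-1-t) * (star q)^t)
          = ∑ t ∈ Finset.range k,
              (if j ≤ t then coefq k j • (q^(k-1-t) * (star q)^t) else 0) := by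
      intro j _
      rw [Finset.smul_sum,
        show Finset.Ico j k = Finset.filter (fun t => j ≤ t) (Finset.range k) from by
          ext t; simp only [Finset.mem_Ico, Finset.mem_filter, Finset.mem_range]; omega,
        Finset.sum_filter]
    rw [Finset.sum_congr rfl e1, Finset.sum_comm]
    refine Finset.sum_congr rfl fun t ht => ?_
    rw [Finset.mem_range] at ht
    rw [← Finset.sum_filter,
      show Finset.filter (fun j => j ≤ t) (Finset.range (k+1)) = Finset.range (t+1) from by
        ext j; simp only [Finset.mem_filter, Finset.mem_range]; omega,
      Finset.sum_smul]
  have hC : ∑ j ∈ Finset.range (k+1),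
        coefq k j • (∑ t ∈ Finset.Ico (k-j) k, q^(k-1-t) * (star q)^t)
      = ∑ t ∈ Finset.range k,
          (∑ j ∈ Finset.Ico (k-t) (k+1), coefq k j) • (q^(k-1-t) * (star q)^t) := by
    have e1 : ∀ j ∈ Finset.range (k+1),
        coefq k j • (∑ t ∈ Finset.Ico (k-j) k, q^(k-1-t) * (star q)^t)
          = ∑ t ∈ Finset.range k,
              (if k-j ≤ t then coefq k j • (q^(k-1-t) * (star q)^t) else 0) := by
      intro j _
      rw [Finset.smul_sum,
        show Finset.Ico (k-j) k = Finset.filter (fun t => k-j ≤ t) (Finset.range k) from by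
          ext t; simp only [Finset.mem_Ico, Finset.mem_filter, Finset.mem_range]; omega,
        Finset.sum_filter]
    rw [Finset.sum_congr rfl e1, Finset.sum_comm]
    refine Finset.sum_congr rfl fun t ht => ?_
    rw [Finset.mem_range] at ht
    rw [← Finset.sum_filter,
      show Finset.filter (fun j => k-j ≤ t) (Finset.range (k+1)) = Finset.Ico (k-t) (k+1) from by
        ext j; simp only [Finset.mem_filter, Finset.mem_range, Finset.mem_Ico]; omega,
      Finset.sum_smul]
  rw [hA, hB, hC, ← Finset.sum_add_distrib, ← Finset.sum_sub_distrib]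
  have hQ' : Qa (k-1) q = ∑ t ∈ Finset.range k, coefq (k-1) t • (q^(k-1-t) * (star q)^t) := by
    have hkk : k - 1 + 1 = k := by omega
    unfold Qa coefq
    rw [hkk]
  rw [hQ', Finset.smul_sum]
  refine Finset.sum_congr rfl fun t ht => ?_
  rw [Finset.mem_range] at ht
  rw [smul_smul, sum_coefq_low, sum_coefq_high k t ht, ← add_smul, ← sub_smul]
  congr 1
  unfold coefq
  have h1 : ((k-t:ℕ):ℝ) = (k:ℝ)-(t:ℝ) := Nat.cast_sub ht.le
  have h2 : ((k-1:ℕ):ℝ) = (k:ℝ)-1 := by rw [Nat.cast_sub hk, Nat.cast_one]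
  rw [h1, h2]
  have hk1 : (1:ℝ) ≤ (k:ℝ) := by exact_mod_cast hk
  have hne1 : (k:ℝ) ≠ 0 := by linarith
  have hne2 : (k:ℝ)+1 ≠ 0 := by linarith
  have hne3 : (k:ℝ)+2 ≠ 0 := by linarith
  have hne5 : (k:ℝ) * ((k:ℝ)+1) ≠ 0 := mul_ne_zero hne1 hne2
  have hne6 : ((k:ℝ)+1) * ((k:ℝ)+2) ≠ 0 := mul_ne_zero hne2 hne3
  have hden : (((k:ℝ)-1)+1)*(((k:ℝ)-1)+2) = (k:ℝ)*((k:ℝ)+1) := by ring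
  rw [hden, div_mul_eq_mul_div, ← add_div, div_sub_div_same, mul_div_assoc',
    div_eq_div_iff hne6 hne5]
  ring
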